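/- arXiv:1208.5581 — 2 statements merged into one kernel-verified Lean document; each statement's English description precedes it below -/
import Mathlib

section
/- For every real number a > 0 and every x ∈ ℝ, one has x² ≤ a(e^x − 1)² + (1 − e^{−x})²/a. -/
private lemma key_aux (x : ℝ) (hx : 0 ≤ x) : x ^ 2 ≤ Real.exp x + Real.exp (-x) - 2 := by
  have h1 : x / 2 ≤ Real.sinh (x / 2) := Real.self_le_sinh_iff.2 (by linarith)
  have h2 : Real.sinh (x / 2) = (Real.exp (x / 2) - Real.exp (-(x / 2))) / 2 := Real.sinh_eq _
  have h3 : Real.exp (x / 2) * Real.exp (-(x / 2)) = 1 := by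
    rw [← Real.exp_add]; norm_num
  have h4 : Real.exp (x / 2) * Real.exp (x / 2) = Real.exp x := by
    rw [← Real.exp_add]; ring_nf
  have h5 : Real.exp (-(x / 2)) * Real.exp (-(x / 2)) = Real.exp (-x) := by
    rw [← Real.exp_add]; ring_nf
  nlinarith [Real.exp_pos (x / 2), Real.exp_pos (-(x / 2)), sq_nonneg (x / 2)]

private lemma key (x : ℝ) : x ^ 2 ≤ Real.exp x + Real.exp (-x) - 2 := by
  rcases le_total 0 x with hx | hx
  · exact key_aux x hx
  · have := key_aux (-x) (by linarith)
    rw [neg_neg] at this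
    nlinarith [this]

/-- For every real `a > 0` and every `x ∈ ℝ`,
`x² ≤ a (e^x − 1)² + (1 − e^{−x})² / a`. -/
theorem stmt_1 (a x : ℝ) (ha : 0 < a) :
    x ^ 2 ≤ a * (Real.exp x - 1) ^ 2 + (1 - Real.exp (-x)) ^ 2 / a := by
  have hk := key x
  have h1 : Real.exp x * Real.exp (-x) = 1 := by rw [← Real.exp_add]; norm_num
  have huv : (Real.exp x - 1) * (1 - Real.exp (-x)) = Real.exp x + Real.exp (-x) - 2 := by
    nlinarith
  rw [div_eq_mul_inv]
  have hinv : a * a⁻¹ = 1 := mul_inv_cancel₀ ha.ne'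
  nlinarith [mul_nonneg (sq_nonneg (a * (Real.exp x - 1) - (1 - Real.exp (-x)))) (inv_pos.2 ha).le,
    sq_nonneg (Real.exp x - 1), (inv_pos.2 ha).le, ha.le]
end

section
/- Let h : ℝ → ℝ be defined by h(t) := e^t − 1 − t. Then for all real numbers γ₁ > 0, γ₂ > 0 and all x, y ∈ ℝ, (γ₁ + γ₂) · h((x + y)/(γ₁ + γ₂)) ≤ γ₁ · h(x/γ₁) + γ₂ · h(y/γ₂). -/
/-- For `h(t) = e^t − 1 − t`, for all `γ₁ > 0`, `γ₂ > 0` and all `x, y ∈ ℝ`,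
`(γ₁ + γ₂) h((x + y)/(γ₁ + γ₂)) ≤ γ₁ h(x/γ₁) + γ₂ h(y/γ₂)`. -/
theorem stmt_4 (h : ℝ → ℝ) (hdef : ∀ t, h t = Real.exp t - 1 - t)
    (γ₁ γ₂ : ℝ) (hγ₁ : 0 < γ₁) (hγ₂ : 0 < γ₂) (x y : ℝ) :
    (γ₁ + γ₂) * h ((x + y) / (γ₁ + γ₂)) ≤ γ₁ * h (x / γ₁) + γ₂ * h (y / γ₂) := by
  have hs : 0 < γ₁ + γ₂ := by linarith
  have key := convexOn_exp.2 (Set.mem_univ (x / γ₁)) (Set.mem_univ (y / γ₂))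
    (le_of_lt (div_pos hγ₁ hs)) (le_of_lt (div_pos hγ₂ hs))
    (by field_simp)
  have harg : γ₁ / (γ₁ + γ₂) * (x / γ₁) + γ₂ / (γ₁ + γ₂) * (y / γ₂)
      = (x + y) / (γ₁ + γ₂) := by field_simp
  simp only [smul_eq_mul] at key; rw [harg] at key
  have hmul := mul_le_mul_of_nonneg_left key (le_of_lt hs)
  simp only [hdef]
  have e1 : (γ₁ + γ₂) * (γ₁ / (γ₁ + γ₂) * Real.exp (x / γ₁)
      + γ₂ / (γ₁ + γ₂) * Real.exp (y / γ₂))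
      = γ₁ * Real.exp (x / γ₁) + γ₂ * Real.exp (y / γ₂) := by
    field_simp
  rw [e1] at hmul
  have hx : γ₁ * (x / γ₁) = x := by field_simp
  have hy : γ₂ * (y / γ₂) = y := by field_simp
  have hz : (γ₁ + γ₂) * ((x + y) / (γ₁ + γ₂)) = x + y := by field_simp
  nlinarith [hmul]
end
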